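/- Let a, b ∈ ℂ with b ≠ 0, and write φ_{a,b}(X) = X·F₁(X)²/F₂(X)² for the rational function with parameters (a,b). Then for every x ∈ ℂ with x ≠ 0 at which all denominators involved are nonzero and φ_{a,b}(1/x) ≠ 0, one has φ_{a/b, 1/b}(x) = 1/φ_{a,b}(1/x). -/

import Mathlib

/-- The rational function `φ_{a,b}(x) = x·F₁(x)²/F₂(x)²`, where
`F₁(X) = X² + (2a + 2b + a²)X + 2ab + b²` and
`F₂(X) = (2a+1)X² + (a² + 2ab + 2b)X + b²`. -/
noncomputable def phi (a b x : ℂ) : ℂ :=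
  x * (x ^ 2 + (2 * a + 2 * b + a ^ 2) * x + 2 * a * b + b ^ 2) ^ 2
    / ((2 * a + 1) * x ^ 2 + (a ^ 2 + 2 * a * b + 2 * b) * x + b ^ 2) ^ 2

lemma phi_aux1 (a b x : ℂ) (hb : b ≠ 0) (hx : x ≠ 0) :
    x ^ 2 + (2 * (a/b) + 2 * (1/b) + (a/b) ^ 2) * x + 2 * (a/b) * (1/b) + (1/b) ^ 2
      = x ^ 2 * ((2 * a + 1) * (1/x) ^ 2 + (a ^ 2 + 2 * a * b + 2 * b) * (1/x) + b ^ 2)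
        / b ^ 2 := by
  have hb2 : (b:ℂ) ^ 2 ≠ 0 := pow_ne_zero _ hb
  have hx2 : (x:ℂ) ^ 2 ≠ 0 := pow_ne_zero _ hx
  rw [eq_div_iff hb2]
  field_simp
  ring

lemma phi_aux2 (a b x : ℂ) (hb : b ≠ 0) (hx : x ≠ 0) :
    (2 * (a/b) + 1) * x ^ 2 + ((a/b) ^ 2 + 2 * (a/b) * (1/b) + 2 * (1/b)) * x + (1/b) ^ 2
      = x ^ 2 * ((1/x) ^ 2 + (2 * a + 2 * b + a ^ 2) * (1/x) + 2 * a * b + b ^ 2)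
        / b ^ 2 := by
  have hb2 : (b:ℂ) ^ 2 ≠ 0 := pow_ne_zero _ hb
  have hx2 : (x:ℂ) ^ 2 ≠ 0 := pow_ne_zero _ hx
  rw [eq_div_iff hb2]
  field_simp
  ring_nf

/-- For `b ≠ 0` and any `x ≠ 0` at which all denominators involved are nonzero and
`φ_{a,b}(1/x) ≠ 0`, one has `φ_{a/b, 1/b}(x) = 1/φ_{a,b}(1/x)`. -/
theorem phi_transform_sigma (a b x : ℂ) (hb : b ≠ 0) (hx : x ≠ 0)
    (hden₁ : (2 * a + 1) * (1 / x) ^ 2 + (a ^ 2 + 2 * a * b + 2 * b) * (1 / x) + b ^ 2 ≠ 0)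
    (hden₂ : (2 * (a / b) + 1) * x ^ 2
        + ((a / b) ^ 2 + 2 * (a / b) * (1 / b) + 2 * (1 / b)) * x + (1 / b) ^ 2 ≠ 0)
    (hphi : phi a b (1 / x) ≠ 0) :
    phi (a / b) (1 / b) x = 1 / phi a b (1 / x) := by
  set N : ℂ := (1/x) ^ 2 + (2 * a + 2 * b + a ^ 2) * (1/x) + 2 * a * b + b ^ 2 with hN
  set D : ℂ := (2 * a + 1) * (1/x) ^ 2 + (a ^ 2 + 2 * a * b + 2 * b) * (1/x) + b ^ 2 with hD
  have hNne : N ≠ 0 := by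
    intro h
    apply hphi
    unfold phi
    rw [← hN, ← hD, h]
    ring
  unfold phi
  rw [← hN, ← hD, phi_aux1 a b x hb hx, phi_aux2 a b x hb hx, ← hN, ← hD]
  field_simp
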